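/- Let ε > 0 and let x_k ∈ ℝ^N with |x_k| ≥ ε. Define x_{k+1}^win = x_k + (ε³/2^k − ε)·x_k/|x_k|, and suppose that in the losing case the new position satisfies |x_{k+1}| ≤ |x_k| + ε. Then the conditional expectation of |x_{k+1}| given x_k (where each case occurs with probability 1/2) satisfies E[|x_{k+1}|] ≤ |x_k| + ε³/2^{k+1}. Consequently, the sequence N_k = |x_k| + ε³/2^k is a supermartingale under the 'point to the origin' strategy. -/
import Mathlib


open Metric

/-- In the Tug-of-War game with the "point to the origin" strategy,
if `‖xk‖ ≥ ε` and the winner of the coin toss moves to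
`xk + (ε³/2^k − ε) • xk/‖xk‖` while in the losing case the new position `xlose`
satisfies `‖xlose‖ ≤ ‖xk‖ + ε`, then the conditional expectation (each case with
probability 1/2) of the norm of the new position is at most `‖xk‖ + ε³/2^(k+1)`;
consequently `N_k = ‖x_k‖ + ε³/2^k` is a supermartingale:
the expected value of `N_{k+1}` is at most `N_k`. -/
theorem tug_of_war_point_to_origin_supermartingale
    {N : ℕ} (ε : ℝ) (hε : 0 < ε) (k : ℕ)
    (xk xwin xlose : EuclideanSpace ℝ (Fin N))
    (hxk : ε ≤ ‖xk‖)
    (hwin : xwin = xk + (ε ^ 3 / 2 ^ k - ε) • (‖xk‖⁻¹ • xk))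
    (hlose : ‖xlose‖ ≤ ‖xk‖ + ε) :
    (1 / 2) * ‖xwin‖ + (1 / 2) * ‖xlose‖ ≤ ‖xk‖ + ε ^ 3 / 2 ^ (k + 1) ∧
    (1 / 2) * (‖xwin‖ + ε ^ 3 / 2 ^ (k + 1)) + (1 / 2) * (‖xlose‖ + ε ^ 3 / 2 ^ (k + 1))
      ≤ ‖xk‖ + ε ^ 3 / 2 ^ k := by
  have hxk0 : 0 < ‖xk‖ := lt_of_lt_of_le hε hxk
  have hc : 0 < ε ^ 3 / 2 ^ k := by positivity
  have hwin' : xwin = (1 + (ε ^ 3 / 2 ^ k - ε) * ‖xk‖⁻¹) • xk := by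
    rw [hwin]; module
  have hnorm : ‖xwin‖ = ‖xk‖ + ε ^ 3 / 2 ^ k - ε := by
    rw [hwin', norm_smul, Real.norm_eq_abs]
    rw [abs_of_nonneg]
    · field_simp
      ring
    · have : ε * ‖xk‖⁻¹ ≤ 1 := by
        rw [← div_eq_mul_inv, div_le_one hxk0]; exact hxk
      nlinarith [mul_pos hc (inv_pos.mpr hxk0)]
  have key : (1 / 2) * ‖xwin‖ + (1 / 2) * ‖xlose‖ ≤ ‖xk‖ + ε ^ 3 / 2 ^ (k + 1) := by
    have h2 : ε ^ 3 / 2 ^ k = 2 * (ε ^ 3 / 2 ^ (k + 1)) := by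
      rw [pow_succ]; field_simp; ring
    rw [hnorm]; linarith
  refine ⟨key, ?_⟩
  have h2 : ε ^ 3 / 2 ^ k = 2 * (ε ^ 3 / 2 ^ (k + 1)) := by
    rw [pow_succ]; field_simp; ring
  nlinarith
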